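/- For each fixed m ≥ 2 there exists a constant C > 0 such that for all d ≥ 1, β_{2m}(Z_2^d) ≤ C · 2^{d/m} + C. In other words, β_{2m}(Z_2^d) = O(2^{d/m}) as d → ∞. -/

import Mathlib

/-- `A` is a zero-free set of rank `r`: the sum of any `r` pairwise distinct
elements of `A` is nonzero. -/
def IsZeroFreeSet {G : Type*} [AddCommGroup G] (r : ℕ) (A : Finset G) : Prop :=
  ∀ B ⊆ A, B.card = r → ∑ x ∈ B, x ≠ 0

/-- `β_r(G)`: the largest size of a zero-free set of rank `r` in `G`. -/
noncomputable def zeroFreeNumber (G : Type*) [AddCommGroup G] [Fintype G] (r : ℕ) : ℕ :=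
  sSup {n | ∃ A : Finset G, IsZeroFreeSet r A ∧ A.card = n}

namespace ZeroFreeAux

variable {d : ℕ}

/-- the sign character on `ZMod 2`. -/
def sgn (t : ZMod 2) : ℤ := if t = 0 then 1 else -1

lemma sgn_zero : sgn 0 = 1 := by decide

lemma sgn_add (s t : ZMod 2) : sgn (s + t) = sgn s * sgn t := by revert s t; decide

lemma sgn_one_add (t : ZMod 2) : sgn (1 + t) = - sgn t := by revert t; decide

/-- the bilinear pairing. -/
def bl (u y : Fin d → ZMod 2) : ZMod 2 := ∑ i, u i * y i

lemma bl_zero (y : Fin d → ZMod 2) : bl 0 y = 0 := by simp [bl]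

lemma bl_add_left (u v y : Fin d → ZMod 2) : bl (u + v) y = bl u y + bl v y := by
  simp [bl, add_mul, Finset.sum_add_distrib]

lemma bl_add_right (u y z : Fin d → ZMod 2) : bl u (y + z) = bl u y + bl u z := by
  simp [bl, mul_add, Finset.sum_add_distrib]

/-- `bl · y` as an additive hom. -/
def blHom (y : Fin d → ZMod 2) : (Fin d → ZMod 2) →+ ZMod 2 where
  toFun u := bl u y
  map_zero' := bl_zero y
  map_add' u v := bl_add_left u v y

lemma sgn_sum {ι : Type*} (s : Finset ι) (c : ι → ZMod 2) :
    sgn (∑ i ∈ s, c i) = ∏ i ∈ s, sgn (c i) := by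
  induction s using Finset.cons_induction with
  | empty => simp [sgn_zero]
  | cons a s ha ih => rw [Finset.sum_cons, Finset.prod_cons, sgn_add, ih]

lemma zmod2_ne_zero (t : ZMod 2) (h : t ≠ 0) : t = 1 := by revert t; decide

lemma G_add_self (u : Fin d → ZMod 2) : u + u = 0 := by
  funext i
  show u i + u i = 0
  have : ∀ a : ZMod 2, a + a = 0 := by decide
  exact this (u i)

/-- orthogonality of characters. -/
lemma orth (s : Fin d → ZMod 2) :
    ∑ y : Fin d → ZMod 2, sgn (bl s y) = if s = 0 then (2:ℤ)^d else 0 := by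
  by_cases hs : s = 0
  · subst hs
    rw [if_pos rfl]
    have h0 : ∀ y : Fin d → ZMod 2, sgn (bl 0 y) = 1 := fun y => by rw [bl_zero, sgn_zero]
    rw [Finset.sum_congr rfl (fun y _ => h0 y), Finset.sum_const, Finset.card_univ]
    simp
  · rw [if_neg hs]
    obtain ⟨j, hj⟩ : ∃ j, s j ≠ 0 := by
      by_contra h
      push_neg at h
      exact hs (funext h)
    have hj1 : s j = 1 := zmod2_ne_zero _ hj
    set δ : Fin d → ZMod 2 := Pi.single j 1 with hδ
    have hblδ : bl s δ = 1 := by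
      rw [bl, Finset.sum_eq_single j]
      · rw [hδ]; simp [hj1]
      · intro b _ hb
        rw [hδ]; simp [Pi.single_eq_of_ne hb]
      · intro h; exact absurd (Finset.mem_univ j) h
    have key : ∀ y, bl s (y + δ) = 1 + bl s y := by
      intro y
      rw [bl_add_right, hblδ, add_comm]
    have hre : ∑ y : Fin d → ZMod 2, sgn (bl s (y + δ))
        = ∑ y : Fin d → ZMod 2, sgn (bl s y) :=
      Equiv.sum_comp (Equiv.addRight δ) (fun z => sgn (bl s z))
    have hneg : ∑ y : Fin d → ZMod 2, sgn (bl s (y + δ))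
        = - ∑ y : Fin d → ZMod 2, sgn (bl s y) := by
      rw [Finset.sum_congr rfl (fun y _ => by rw [key y, sgn_one_add]), Finset.sum_neg_distrib]
    omega

variable (A : Finset (Fin d → ZMod 2))

/-- Fourier coefficient of the indicator of `A`. -/
def xA (y : Fin d → ZMod 2) : ℤ := ∑ a ∈ A, sgn (bl a y)

lemma xA_zero : xA A 0 = (A.card : ℤ) := by
  rw [xA]
  have : ∀ a : Fin d → ZMod 2, bl a 0 = 0 := by intro a; simp [bl]
  rw [Finset.sum_congr rfl (fun a _ => by rw [this a, sgn_zero])]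
  simp

/-- number of zero-sum `r`-tuples with entries in `A` (repetitions allowed). -/
def Nr (r : ℕ) : ℕ :=
  ((Fintype.piFinset (fun _ : Fin r => A)).filter (fun f => ∑ i, f i = 0)).card

/-- The `r`-th moment of the Fourier coefficients counts zero-sum `r`-tuples. -/
lemma S_eq (r : ℕ) :
    ∑ y : Fin d → ZMod 2, (xA A y) ^ r = 2 ^ d * (Nr A r : ℤ) := by
  classical
  have h1 : ∀ y, (xA A y) ^ r
      = ∑ f ∈ Fintype.piFinset (fun _ : Fin r => A), sgn (bl (∑ i, f i) y) := by
    intro y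
    have hp : (xA A y) ^ r = ∏ _i : Fin r, (xA A y) := by
      rw [Finset.prod_const, Finset.card_univ, Fintype.card_fin]
    rw [hp, xA, Finset.prod_univ_sum]
    refine Finset.sum_congr rfl fun f _ => ?_
    rw [show bl (∑ i, f i) y = ∑ i, bl (f i) y from map_sum (blHom y) f Finset.univ, sgn_sum]
  calc ∑ y : Fin d → ZMod 2, (xA A y) ^ r
      = ∑ y : Fin d → ZMod 2, ∑ f ∈ Fintype.piFinset (fun _ : Fin r => A),
          sgn (bl (∑ i, f i) y) := Finset.sum_congr rfl (fun y _ => h1 y)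
    _ = ∑ f ∈ Fintype.piFinset (fun _ : Fin r => A), ∑ y : Fin d → ZMod 2,
          sgn (bl (∑ i, f i) y) := Finset.sum_comm
    _ = ∑ f ∈ Fintype.piFinset (fun _ : Fin r => A),
          (if (∑ i, f i) = 0 then (2:ℤ)^d else 0) :=
        Finset.sum_congr rfl (fun f _ => orth _)
    _ = ∑ f ∈ (Fintype.piFinset (fun _ : Fin r => A)).filter (fun f => ∑ i, f i = 0),
          (2:ℤ)^d := (Finset.sum_filter _ _).symm
    _ = 2 ^ d * (Nr A r : ℤ) := by
        rw [Finset.sum_const, Nr, nsmul_eq_mul, mul_comm]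

lemma pow_card_le (k : ℕ) :
    (A.card : ℤ) ^ (2 * k) ≤ ∑ y : Fin d → ZMod 2, (xA A y) ^ (2 * k) := by
  have h0 : ∀ y, (0:ℤ) ≤ (xA A y) ^ (2 * k) := by
    intro y
    rw [mul_comm, pow_mul]
    positivity
  have := Finset.single_le_sum (f := fun y => (xA A y) ^ (2*k)) (fun y _ => h0 y)
    (Finset.mem_univ (0 : Fin d → ZMod 2))
  simpa [xA_zero] using this

/-- Key combinatorial bound: if no `k+2` distinct elements of `A` sum to zero, then
every zero-sum `(k+2)`-tuple has a repeated entry, hence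
`Nr (k+2) ≤ (k+2)^2 * |A| * Nr k`. -/
lemma repeat_bound (k : ℕ)
    (hA : ∀ B ⊆ A, B.card = k + 2 → ∑ x ∈ B, x ≠ 0) :
    Nr A (k + 2) ≤ (k + 2) ^ 2 * A.card * Nr A k := by
  classical
  set T := (Fintype.piFinset (fun _ : Fin (k+2) => A)).filter
      (fun f => ∑ i, f i = 0) with hT
  set P : Finset (Fin (k+2) × Fin (k+2)) :=
      Finset.univ.filter (fun p => p.1 ≠ p.2) with hP
  have hcov : T ⊆ P.biUnion (fun p => T.filter (fun f => f p.1 = f p.2)) := by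
    intro f hf
    rw [Finset.mem_biUnion]
    by_contra hcon
    push_neg at hcon
    have hinj : Function.Injective f := by
      intro i j hij
      by_contra hne
      exact hcon (i, j) (by simp [hP, hne]) (Finset.mem_filter.mpr ⟨hf, hij⟩)
    obtain ⟨hfpi, hfsum⟩ := Finset.mem_filter.mp hf
    have hfA : ∀ t, f t ∈ A := fun t => (Fintype.mem_piFinset.mp hfpi) t
    have hBsub : Finset.image f Finset.univ ⊆ A := by
      intro x hx
      obtain ⟨t, _, rfl⟩ := Finset.mem_image.mp hx
      exact hfA t
    have hBcard : (Finset.image f Finset.univ).card = k + 2 := by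
      rw [Finset.card_image_of_injective _ hinj, Finset.card_univ, Fintype.card_fin]
    refine hA _ hBsub hBcard ?_
    rw [Finset.sum_image (fun a _ b _ h => hinj h)]
    exact hfsum
  have hmain : ∀ p ∈ P, (T.filter (fun f => f p.1 = f p.2)).card ≤ A.card * Nr A k := by
    rintro ⟨i, j⟩ hp
    have hij : i ≠ j := by simpa [hP] using hp
    set s : Finset (Fin (k+2)) := {i, j} with hs
    have hscard : s.card = 2 := by
      rw [hs, Finset.card_insert_of_notMem (by simpa using hij), Finset.card_singleton]
    have hccard : sᶜ.card = k := by
      have h1 : Fintype.card (Fin (k+2)) = k + 2 := Fintype.card_fin _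
      rw [Finset.card_compl, hscard, h1]
      omega
    set φ := sᶜ.orderIsoOfFin hccard with hφ
    have hcard : (A ×ˢ ((Fintype.piFinset (fun _ : Fin k => A)).filter
        (fun g => ∑ t, g t = 0))).card = A.card * Nr A k := by
      rw [Finset.card_product]; rfl
    rw [← hcard]
    apply Finset.card_le_card_of_injOn (fun f => (f i, fun t => f (φ t)))
    · intro f hf
      obtain ⟨hfT, hfeq⟩ := Finset.mem_filter.mp hf
      obtain ⟨hfpi, hfsum⟩ := Finset.mem_filter.mp hfT
      have hfA : ∀ t, f t ∈ A := fun t => (Fintype.mem_piFinset.mp hfpi) t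
      rw [Finset.mem_coe, Finset.mem_product]
      refine ⟨hfA i, ?_⟩
      rw [Finset.mem_filter]
      refine ⟨Fintype.mem_piFinset.mpr (fun t => hfA _), ?_⟩
      have hsplit : ∑ x ∈ s, f x + ∑ x ∈ sᶜ, f x = ∑ x, f x :=
        Finset.sum_add_sum_compl s f
      have hpair : ∑ x ∈ s, f x = 0 := by
        rw [hs, Finset.sum_pair hij, ← hfeq]
        exact G_add_self (f i)
      rw [hpair, zero_add, hfsum] at hsplit
      calc ∑ t : Fin k, f (φ t) = ∑ x : {x // x ∈ sᶜ}, f x :=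
            Fintype.sum_equiv φ.toEquiv _ _ (fun t => rfl)
        _ = ∑ x ∈ sᶜ, f x := Finset.sum_coe_sort sᶜ f
        _ = 0 := hsplit
    · intro f hf g hg hfg
      obtain ⟨hfT, hfeq⟩ := Finset.mem_filter.mp hf
      obtain ⟨hgT, hgeq⟩ := Finset.mem_filter.mp hg
      have h1 : f i = g i := congrArg Prod.fst hfg
      have h2 : ∀ t, f (φ t) = g (φ t) := fun t => congrFun (congrArg Prod.snd hfg) t
      funext x
      by_cases hx : x ∈ sᶜ
      · obtain ⟨t, ht⟩ : ∃ t, ((φ t : {x // x ∈ sᶜ}) : Fin (k+2)) = x :=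
          ⟨φ.symm ⟨x, hx⟩, by simp⟩
        rw [← ht]
        exact h2 t
      · have hxs : x ∈ s := by simpa using hx
        rw [hs] at hxs
        rcases Finset.mem_insert.mp hxs with rfl | hx2
        · exact h1
        · rw [Finset.mem_singleton] at hx2
          subst hx2
          rw [← hfeq, ← hgeq]
          exact h1
  calc Nr A (k+2) = T.card := rfl
    _ ≤ (P.biUnion (fun p => T.filter (fun f => f p.1 = f p.2))).card :=
        Finset.card_le_card hcov
    _ ≤ ∑ p ∈ P, (T.filter (fun f => f p.1 = f p.2)).card := Finset.card_biUnion_le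
    _ ≤ ∑ _p ∈ P, A.card * Nr A k := Finset.sum_le_sum hmain
    _ = P.card * (A.card * Nr A k) := by rw [Finset.sum_const, smul_eq_mul]
    _ ≤ (k+2)^2 * (A.card * Nr A k) := by
        refine Nat.mul_le_mul_right _ ?_
        calc P.card ≤ (Finset.univ : Finset (Fin (k+2) × Fin (k+2))).card :=
              Finset.card_filter_le _ _
          _ = (k+2)^2 := by simp [sq]
    _ = (k+2)^2 * A.card * Nr A k := by ring

/-- The main integer bound: `|A|^m ≤ (4 m^2)^m * 2^d`. -/
lemma main_bound (m : ℕ) (hm : 2 ≤ m) (hA : IsZeroFreeSet (2*m) A) :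
    (A.card : ℤ) ^ m ≤ ((4 * m^2 : ℕ) : ℤ) ^ m * 2 ^ d := by
  classical
  rcases Nat.eq_zero_or_pos A.card with h0 | hpos
  · rw [h0]
    push_cast
    rw [zero_pow (by omega : m ≠ 0)]
    positivity
  have hn1 : (1:ℤ) ≤ (A.card : ℤ) := by exact_mod_cast hpos
  have hnpos : (0:ℤ) < (A.card : ℤ) := by linarith
  set n : ℤ := (A.card : ℤ) with hn
  set a : ℕ → ℤ := fun k => ∑ y : Fin d → ZMod 2, (xA A y) ^ (2*k) with ha
  have halow : ∀ k, n ^ (2*k) ≤ a k := fun k => pow_card_le A k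
  have hapos : ∀ k, 0 < a k := by
    intro k
    refine lt_of_lt_of_le ?_ (halow k)
    positivity
  -- Cauchy–Schwarz: log-convexity of even moments
  have hCS : ∀ t : ℕ, a (t+1) ^ 2 ≤ a t * a (t+2) := by
    intro t
    have hcs := Finset.sum_mul_sq_le_sq_mul_sq Finset.univ
      (fun y => (xA A y) ^ (t+2)) (fun y => (xA A y) ^ t)
    have e1 : ∑ y : Fin d → ZMod 2, (xA A y) ^ (t+2) * (xA A y) ^ t = a (t+1) := by
      refine Finset.sum_congr rfl fun y _ => ?_
      rw [← pow_add]
      congr 1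
      ring
    have e2 : ∑ y : Fin d → ZMod 2, ((xA A y) ^ (t+2)) ^ 2 = a (t+2) := by
      refine Finset.sum_congr rfl fun y _ => ?_
      rw [← pow_mul]
      congr 1
      ring
    have e3 : ∑ y : Fin d → ZMod 2, ((xA A y) ^ t) ^ 2 = a t := by
      refine Finset.sum_congr rfl fun y _ => ?_
      rw [← pow_mul]
      congr 1
      ring
    rw [e1, e2, e3] at hcs
    linarith [hcs]
  -- iterated log-convexity
  have hkey : ∀ t : ℕ, a (t+1) ^ (t+1) ≤ a 1 * a (t+2) ^ t := by
    intro t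
    induction t with
    | zero => simp
    | succ t ih =>
      have h1 : (a (t+2) ^ 2) ^ (t+1) ≤ (a (t+1) * a (t+3)) ^ (t+1) :=
        pow_le_pow_left₀ (sq_nonneg _) (hCS (t+1)) _
      have h3 : a (t+1) ^ (t+1) * a (t+3) ^ (t+1)
          ≤ (a 1 * a (t+2) ^ t) * a (t+3) ^ (t+1) :=
        mul_le_mul_of_nonneg_right ih (pow_nonneg (hapos _).le _)
      have h6 : a (t+2) ^ t * a (t+2) ^ (t+2)
          ≤ a (t+2) ^ t * (a 1 * a (t+3) ^ (t+1)) := by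
        calc a (t+2) ^ t * a (t+2) ^ (t+2) = (a (t+2) ^ 2) ^ (t+1) := by ring
          _ ≤ (a (t+1) * a (t+3)) ^ (t+1) := h1
          _ = a (t+1) ^ (t+1) * a (t+3) ^ (t+1) := mul_pow _ _ _
          _ ≤ (a 1 * a (t+2) ^ t) * a (t+3) ^ (t+1) := h3
          _ = a (t+2) ^ t * (a 1 * a (t+3) ^ (t+1)) := by ring
      exact le_of_mul_le_mul_left h6 (pow_pos (hapos _) t)
  obtain ⟨M, rfl⟩ : ∃ M, m = M + 2 := ⟨m - 2, by omega⟩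
  -- the recursion at the top level
  have hrep : Nr A (2*(M+2)) ≤ (2*(M+2))^2 * A.card * Nr A (2*(M+1)) := by
    have h2m : 2*(M+1) + 2 = 2*(M+2) := by ring
    have hA' : ∀ B ⊆ A, B.card = 2*(M+1) + 2 → ∑ x ∈ B, x ≠ 0 := by
      intro B hB hc
      exact hA B hB (by omega)
    have := repeat_bound A (2*(M+1)) hA'
    rwa [h2m] at this
  have h1 : a (M+2) ≤ ((2*(M+2):ℕ) : ℤ)^2 * n * a (M+1) := by
    have e1 : a (M+2) = 2^d * (Nr A (2*(M+2)) : ℤ) := S_eq A _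
    have e2 : a (M+1) = 2^d * (Nr A (2*(M+1)) : ℤ) := S_eq A _
    rw [e1, e2]
    calc (2:ℤ)^d * (Nr A (2*(M+2)) : ℤ)
        ≤ 2^d * (((2*(M+2))^2 * A.card * Nr A (2*(M+1)) : ℕ) : ℤ) := by
          apply mul_le_mul_of_nonneg_left _ (by positivity)
          exact_mod_cast hrep
      _ = ((2*(M+2):ℕ) : ℤ)^2 * n * (2^d * (Nr A (2*(M+1)) : ℤ)) := by
          push_cast
          ring
  have ha1 : a 1 ≤ 4 * n * 2^d := by
    have hzf2 : ∀ B ⊆ A, B.card = 0 + 2 → ∑ x ∈ B, x ≠ 0 := by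
      intro B hB hc hsum
      rw [zero_add] at hc
      obtain ⟨x, y, hxy, rfl⟩ := Finset.card_eq_two.mp hc
      rw [Finset.sum_pair hxy] at hsum
      apply hxy
      have h := congrArg (· + y) hsum
      simp only [add_assoc, G_add_self, add_zero, zero_add] at h
      exact h
    have hrep1 := repeat_bound A 0 hzf2
    have hNr0 : Nr A 0 = 1 := by
      rw [Nr]
      rw [Finset.filter_true_of_mem (fun f _ => by simp)]
      rw [Fintype.card_piFinset]
      simp
    rw [hNr0, mul_one] at hrep1
    have e1 : a 1 = 2^d * (Nr A 2 : ℤ) := S_eq A 2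
    rw [e1]
    calc (2:ℤ)^d * (Nr A 2 : ℤ) ≤ 2^d * (((0+2)^2 * A.card : ℕ) : ℤ) := by
          apply mul_le_mul_of_nonneg_left _ (by positivity)
          exact_mod_cast hrep1
      _ = 4 * n * 2^d := by push_cast; ring
  -- combine everything
  have hn0 : (0:ℤ) ≤ n := by linarith
  have hKnn : (0:ℤ) ≤ ((2*(M+2):ℕ) : ℤ)^2 * n := by positivity
  have hstep : a (M+2) ^ (M+1)
      ≤ (((2*(M+2):ℕ) : ℤ)^2 * n)^(M+1) * (a 1 * a (M+2) ^ M) := by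
    calc a (M+2) ^ (M+1) ≤ (((2*(M+2):ℕ) : ℤ)^2 * n * a (M+1)) ^ (M+1) :=
          pow_le_pow_left₀ (hapos _).le h1 _
      _ = (((2*(M+2):ℕ) : ℤ)^2 * n)^(M+1) * a (M+1) ^ (M+1) := mul_pow _ _ _
      _ ≤ (((2*(M+2):ℕ) : ℤ)^2 * n)^(M+1) * (a 1 * a (M+2) ^ M) := by
          apply mul_le_mul_of_nonneg_left (hkey M) (pow_nonneg hKnn _)
  have hcancel : a (M+2) ≤ (((2*(M+2):ℕ) : ℤ)^2 * n)^(M+1) * a 1 := by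
    have h' : a (M+2) ^ M * a (M+2)
        ≤ a (M+2) ^ M * ((((2*(M+2):ℕ) : ℤ)^2 * n)^(M+1) * a 1) := by
      calc a (M+2) ^ M * a (M+2) = a (M+2) ^ (M+1) := (pow_succ _ _).symm
        _ ≤ (((2*(M+2):ℕ) : ℤ)^2 * n)^(M+1) * (a 1 * a (M+2) ^ M) := hstep
        _ = a (M+2) ^ M * ((((2*(M+2):ℕ) : ℤ)^2 * n)^(M+1) * a 1) := by ring
    exact le_of_mul_le_mul_left h' (pow_pos (hapos _) M)
  have hfin : n ^ (2*(M+2)) ≤ (((2*(M+2):ℕ) : ℤ)^2 * n)^(M+1) * (4 * n * 2^d) := by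
    calc n ^ (2*(M+2)) ≤ a (M+2) := halow _
      _ ≤ (((2*(M+2):ℕ) : ℤ)^2 * n)^(M+1) * a 1 := hcancel
      _ ≤ (((2*(M+2):ℕ) : ℤ)^2 * n)^(M+1) * (4 * n * 2^d) := by
          apply mul_le_mul_of_nonneg_left ha1 (pow_nonneg hKnn _)
  have hsq : n ^ (M+2) * n ^ (M+2)
      ≤ ((((2*(M+2):ℕ) : ℤ)^2)^(M+1) * 4 * 2^d) * n ^ (M+2) := by
    calc n ^ (M+2) * n ^ (M+2) = n ^ (2*(M+2)) := by ring
      _ ≤ (((2*(M+2):ℕ) : ℤ)^2 * n)^(M+1) * (4 * n * 2^d) := hfin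
      _ = ((((2*(M+2):ℕ) : ℤ)^2)^(M+1) * 4 * 2^d) * n ^ (M+2) := by ring
  have hf2 : n ^ (M+2) ≤ (((2*(M+2):ℕ) : ℤ)^2)^(M+1) * 4 * 2^d :=
    le_of_mul_le_mul_right hsq (pow_pos hnpos _)
  have hc4 : (4:ℤ) ≤ ((2*(M+2):ℕ) : ℤ)^2 := by
    push_cast
    nlinarith [sq_nonneg ((M:ℤ))]
  calc n ^ (M+2) ≤ (((2*(M+2):ℕ) : ℤ)^2)^(M+1) * 4 * 2^d := hf2
    _ ≤ (((2*(M+2):ℕ) : ℤ)^2)^(M+1) * ((2*(M+2):ℕ) : ℤ)^2 * 2^d := by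
        apply mul_le_mul_of_nonneg_right _ (by positivity)
        apply mul_le_mul_of_nonneg_left hc4 (by positivity)
    _ = (((2*(M+2):ℕ) : ℤ)^2)^(M+2) * 2^d := by rw [← pow_succ]
    _ = ((4 * (M+2)^2 : ℕ) : ℤ)^(M+2) * 2^d := by
        congr 1
        push_cast
        ring

/-- Real-valued bound. -/
lemma real_bound (m : ℕ) (hm : 2 ≤ m) (hA : IsZeroFreeSet (2*m) A) :
    (A.card : ℝ) ≤ (4 * (m:ℝ)^2) * (2:ℝ) ^ ((d:ℝ) / (m:ℝ)) := by
  have hZ := main_bound A m hm hA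
  have hm0 : (m:ℝ) ≠ 0 := Nat.cast_ne_zero.mpr (by omega)
  have hR : (A.card : ℝ) ^ m ≤ ((4 * (m:ℝ)^2) * (2:ℝ) ^ ((d:ℝ) / (m:ℝ))) ^ m := by
    have h1 : (A.card : ℝ) ^ m ≤ (4 * (m:ℝ)^2) ^ m * 2 ^ d := by
      have := hZ
      have hcast : ((4 * m^2 : ℕ) : ℝ) = 4 * (m:ℝ)^2 := by push_cast; ring
      calc (A.card : ℝ) ^ m ≤ ((4 * m^2 : ℕ) : ℝ) ^ m * 2 ^ d := by exact_mod_cast hZ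
        _ = (4 * (m:ℝ)^2) ^ m * 2 ^ d := by rw [hcast]
    have h2 : ((4 * (m:ℝ)^2) * (2:ℝ) ^ ((d:ℝ) / (m:ℝ))) ^ m
        = (4 * (m:ℝ)^2) ^ m * 2 ^ d := by
      rw [mul_pow]
      congr 1
      rw [← Real.rpow_natCast ((2:ℝ) ^ ((d:ℝ) / (m:ℝ))) m,
        ← Real.rpow_mul (by norm_num : (0:ℝ) ≤ 2),
        div_mul_cancel₀ _ hm0, Real.rpow_natCast]
    rw [h2]
    exact h1
  exact le_of_pow_le_pow_left₀ (by omega) (by positivity) hR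

end ZeroFreeAux

/-- For each fixed `m ≥ 2` there is a constant `C > 0` such that for all `d ≥ 1`,
`β_{2m}(ℤ₂^d) ≤ C · 2^(d/m) + C`, i.e. `β_{2m}(ℤ₂^d) = O(2^(d/m))` as `d → ∞`. -/
theorem zeroFree_upper_general (m : ℕ) (hm : 2 ≤ m) :
    ∃ C : ℝ, 0 < C ∧ ∀ d : ℕ, 1 ≤ d →
      (zeroFreeNumber (Fin d → ZMod 2) (2 * m) : ℝ) ≤
        C * (2 : ℝ) ^ ((d : ℝ) / (m : ℝ)) + C := by
  have hmR : (0:ℝ) < (m:ℝ) := by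
    exact_mod_cast (by omega : 0 < m)
  refine ⟨4 * (m:ℝ)^2, by positivity, ?_⟩
  intro d hd
  have hne : ({n | ∃ A : Finset (Fin d → ZMod 2), IsZeroFreeSet (2*m) A ∧ A.card = n}).Nonempty := by
    refine ⟨0, ∅, ?_, Finset.card_empty⟩
    intro B hB hc
    exfalso
    rw [Finset.subset_empty] at hB
    subst hB
    rw [Finset.card_empty] at hc
    omega
  have hbdd : BddAbove {n | ∃ A : Finset (Fin d → ZMod 2), IsZeroFreeSet (2*m) A ∧ A.card = n} := by
    refine ⟨Fintype.card (Fin d → ZMod 2), ?_⟩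
    rintro n ⟨A, -, rfl⟩
    exact Finset.card_le_univ A
  have hmem := Nat.sSup_mem hne hbdd
  obtain ⟨A, hzf, hcard⟩ := hmem
  rw [zeroFreeNumber, ← hcard]
  have hb := ZeroFreeAux.real_bound A m hm hzf
  have hCpos : (0:ℝ) < 4 * (m:ℝ)^2 := by positivity
  linarith
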